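/- Let A, B, B', C be complex-valued multiplicative characters of a finite field F_q with q elements, let x ∈ F_q, and let y ∈ F_q with y ≠ 1. Then F₂(A;B,B';C,B';x,y) = -ε(y)·Ā(1-y)·₂F₁(A,B;C | x/(1-y)) + Ā(-y)·C̄(x)·(B̄C)(1-x) + Ā(-y)·C̄(x)·(B̄C)(1-x)·(-1 + (q-1)·δ(AB̄')) + B̄'(y)·{AB̄' choose B̄'}·₂F₁(AB̄', B; C | x). -/

import Mathlib

open Finset

noncomputable instance {F : Type*} [Field F] [Fintype F] : Fintype (MulChar F ℂ) :=
  Fintype.ofFinite _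

/-- Finite-field binomial coefficient `{A choose B} = B(-1) · J(A, B̄)`,
where `J(χ,λ) = ∑_u χ(u)·λ(1-u)` is the Jacobi sum. -/
noncomputable def binom {F : Type*} [Field F] [Fintype F] (A B : MulChar F ℂ) : ℂ :=
  B (-1) * ∑ u : F, A u * B⁻¹ (1 - u)

/-- Finite-field Gauss hypergeometric series
`₂F₁(A,B;C|x) = ε(x)·(BC)(-1)·∑_y B(y)·(B̄C)(1-y)·Ā(1-xy)`. -/
noncomputable def gauss2F1 {F : Type*} [Field F] [Fintype F]
    (A B C : MulChar F ℂ) (x : F) : ℂ :=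
  (1 : MulChar F ℂ) x * (B * C) (-1) *
    ∑ y : F, B y * (B⁻¹ * C) (1 - y) * A⁻¹ (1 - x * y)

/-- Finite-field `₃F₂` hypergeometric series. -/
noncomputable def hyper3F2 {F : Type*} [Field F] [Fintype F]
    (A₀ A₁ A₂ B₁ B₂ : MulChar F ℂ) (x : F) : ℂ :=
  ((Fintype.card F : ℂ) - 1)⁻¹ *
    ∑ χ : MulChar F ℂ,
      binom (A₀ * χ) χ * binom (A₁ * χ) (B₁ * χ) * binom (A₂ * χ) (B₂ * χ) * χ x

/-- Finite-field Appell series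
`F₂(A;B,B';C,C';x,y) = ε(xy)·(BB'CC')(-1)·∑_{u,v} B(u)B'(v)(B̄C)(1-u)(B̄'C')(1-v)·Ā(1-ux-vy)`. -/
noncomputable def appellF2 {F : Type*} [Field F] [Fintype F]
    (A B B' C C' : MulChar F ℂ) (x y : F) : ℂ :=
  (1 : MulChar F ℂ) (x * y) * (B * B' * C * C') (-1) *
    ∑ u : F, ∑ v : F,
      B u * B' v * (B⁻¹ * C) (1 - u) * (B'⁻¹ * C') (1 - v) * A⁻¹ (1 - u * x - v * y)

open scoped Classical in
/-- `δ(x) = 1` if `x = 0`, and `0` otherwise. -/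
noncomputable def deltaF {F : Type*} [Field F] (x : F) : ℂ :=
  if x = 0 then 1 else 0

open scoped Classical in
/-- `δ(χ) = 1` if `χ = ε` (the trivial character), and `0` otherwise. -/
noncomputable def deltaChar {F : Type*} [Field F] [Fintype F] (χ : MulChar F ℂ) : ℂ :=
  if χ = 1 then 1 else 0

section Helpers

variable {F : Type*} [Field F] [Fintype F]

lemma mc_zero (χ : MulChar F ℂ) : χ 0 = 0 := χ.map_nonunit (by simp)

lemma mc_mul_apply (χ ψ : MulChar F ℂ) (a : F) : (χ * ψ) a = χ a * ψ a := by
  simp [MulChar.coeToFun_mul]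

lemma mc_inv_val (χ : MulChar F ℂ) (a : F) : χ a⁻¹ = (χ a)⁻¹ := by
  rcases eq_or_ne a 0 with rfl | ha
  · simp [mc_zero]
  · refine eq_inv_of_mul_eq_one_left ?_
    rw [← map_mul χ, inv_mul_cancel₀ ha, map_one χ]

lemma mc_inv_apply (χ : MulChar F ℂ) (a : F) : χ⁻¹ a = (χ a)⁻¹ := by
  rw [MulChar.inv_apply', mc_inv_val]

lemma mc_ne_zero (χ : MulChar F ℂ) {a : F} (ha : a ≠ 0) : χ a ≠ 0 := by
  have : χ a * χ a⁻¹ = 1 := by rw [← map_mul χ, mul_inv_cancel₀ ha, map_one χ]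
  exact left_ne_zero_of_mul_eq_one this

lemma mc_one_apply' {a : F} (ha : a ≠ 0) : (1 : MulChar F ℂ) a = 1 :=
  MulChar.one_apply (isUnit_iff_ne_zero.mpr ha)

lemma mc_neg_one_sq (χ : MulChar F ℂ) : χ (-1) * χ (-1) = 1 := by
  rw [← map_mul χ, neg_mul_neg, one_mul, map_one χ]

lemma mc_sum (χ : MulChar F ℂ) :
    ∑ a : F, χ a = if χ = 1 then (Fintype.card F : ℂ) - 1 else 0 := by
  classical
  split_ifs with h
  · subst h
    rw [MulChar.sum_one_eq_card_units, Fintype.card_units]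
    have : 0 < Fintype.card F := Fintype.card_pos
    push_cast [Nat.cast_sub this]
    ring
  · exact MulChar.sum_eq_zero_of_ne_one h

/-- Jacobi sum flip: `J(B',Ā) = B'(-1) · J(AB̄', B')`. -/
lemma jacobi_flip (A B' : MulChar F ℂ) :
    ∑ w : F, B' w * A⁻¹ (1 - w) = B' (-1) * ∑ u : F, (A * B'⁻¹) u * B' (1 - u) := by
  classical
  have key : ∀ (f : F → ℂ), f 0 = 0 → f 1 = 0 →
      ∑ w : F, f w = ∑ w ∈ (univ \ {0, 1} : Finset F), f w := by
    intro f h0 h1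
    refine (Finset.sum_subset (Finset.subset_univ _) ?_).symm
    intro w _ hw
    simp only [Finset.mem_sdiff, Finset.mem_univ, true_and, Finset.mem_insert,
      Finset.mem_singleton, not_or, not_and, not_not] at hw
    rcases eq_or_ne w 0 with rfl | hw0
    · exact h0
    · rcases eq_or_ne w 1 with rfl | hw1
      · exact h1
      · exact absurd (by simp [hw0, hw1] : w ∉ ({0,1} : Finset F)) (by simpa using hw)
  rw [key (fun w => B' w * A⁻¹ (1 - w)) (by simp [mc_zero])
      (by simp [mc_inv_apply, mc_zero]),
    key (fun u => (A * B'⁻¹) u * B' (1 - u)) (by simp [mc_mul_apply, mc_zero])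
      (by simp [mc_zero]), Finset.mul_sum]
  refine Finset.sum_nbij' (fun w => (1 - w)⁻¹) (fun u => 1 - u⁻¹) ?_ ?_ ?_ ?_ ?_
  · intro w hw
    simp only [mem_sdiff, mem_univ, true_and, mem_insert, mem_singleton, not_or] at hw ⊢
    obtain ⟨hw0, hw1⟩ := hw
    have h1w : (1 : F) - w ≠ 0 := sub_ne_zero.mpr (Ne.symm hw1)
    refine ⟨inv_ne_zero h1w, fun h => hw0 ?_⟩
    have h2 : (1 : F) - w = 1 := by rw [← inv_inv (1 - w), h, inv_one]
    exact sub_eq_self.mp h2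
  · intro u hu
    simp only [mem_sdiff, mem_univ, true_and, mem_insert, mem_singleton, not_or] at hu ⊢
    obtain ⟨hu0, hu1⟩ := hu
    constructor
    · intro h
      rw [sub_eq_zero] at h
      exact hu1 (by rw [← inv_inv u, ← h, inv_one])
    · intro h
      exact hu0 (inv_eq_zero.mp (sub_eq_self.mp h))
  · intro w hw
    simp only [mem_sdiff, mem_univ, true_and, mem_insert, mem_singleton, not_or] at hw
    obtain ⟨hw0, hw1⟩ := hw
    have h1w : (1 : F) - w ≠ 0 := sub_ne_zero.mpr (Ne.symm hw1)
    field_simp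
    ring
  · intro u hu
    simp only [mem_sdiff, mem_univ, true_and, mem_insert, mem_singleton, not_or] at hu
    obtain ⟨hu0, hu1⟩ := hu
    have h1u : (1 : F) - u⁻¹ ≠ 0 := by
      intro h
      rw [sub_eq_zero] at h
      exact hu1 (by rw [← inv_inv u, ← h, inv_one])
    field_simp
    ring
  · intro w hw
    simp only [mem_sdiff, mem_univ, true_and, mem_insert, mem_singleton, not_or] at hw
    obtain ⟨hw0, hw1⟩ := hw
    have h1w : (1 : F) - w ≠ 0 := sub_ne_zero.mpr (Ne.symm hw1)
    have e1 : (1 : F) - (1 - w)⁻¹ = (-1) * (w * (1 - w)⁻¹) := by field_simp; ring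
    simp only [e1, mc_mul_apply, mc_inv_apply, mc_inv_val, map_mul B', inv_inv]
    have hA := mc_ne_zero A h1w
    have hB := mc_ne_zero B' h1w
    have hBw := mc_ne_zero B' hw0
    have hsq : B' (-1) * B' (-1) = 1 := mc_neg_one_sq B'
    field_simp
    linear_combination (-1 : ℂ) * hsq

/-- Removing the `ε(1-v)` factor costs the `v = 1` term. -/
lemma eps_sum (f : F → ℂ) :
    ∑ v : F, (1 : MulChar F ℂ) (1 - v) * f v = (∑ v : F, f v) - f 1 := by
  classical
  have h0 : (1 : MulChar F ℂ) (1 - 1) * f 1 = 0 := by simp [mc_zero]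
  calc ∑ v : F, (1 : MulChar F ℂ) (1 - v) * f v
      = ∑ v ∈ univ.erase 1, (1 : MulChar F ℂ) (1 - v) * f v :=
        (Finset.sum_erase (f := fun v => (1 : MulChar F ℂ) (1 - v) * f v) univ h0).symm
    _ = ∑ v ∈ univ.erase 1, f v := by
        refine Finset.sum_congr rfl fun v hv => ?_
        have hv1 : v ≠ 1 := (Finset.mem_erase.mp hv).1
        rw [mc_one_apply' (sub_ne_zero.mpr (Ne.symm hv1)), one_mul]
    _ = (∑ v : F, f v) - f 1 := Finset.sum_erase_eq_sub (mem_univ 1)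

end Helpers

set_option maxHeartbeats 1000000 in
/-- reduction formula for `F₂(A;B,B';C,B';x,y)`, `y ≠ 1`. -/
theorem appellF2_Cprime_eq_Bprime {F : Type*} [Field F] [Fintype F]
    (A B B' C : MulChar F ℂ) (x y : F) (hy : y ≠ 1) :
    appellF2 A B B' C B' x y =
      -(1 : MulChar F ℂ) y * A⁻¹ (1 - y) * gauss2F1 A B C (x / (1 - y)) +
      A⁻¹ (-y) * C⁻¹ x * (B⁻¹ * C) (1 - x) +
      A⁻¹ (-y) * C⁻¹ x * (B⁻¹ * C) (1 - x) *
        (-1 + ((Fintype.card F : ℂ) - 1) * deltaChar (A * B'⁻¹)) +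
      B'⁻¹ y * binom (A * B'⁻¹) B'⁻¹ * gauss2F1 (A * B'⁻¹) B C x := by
  classical
  rcases eq_or_ne x 0 with rfl | hx
  · simp [appellF2, gauss2F1, mc_zero]
  rcases eq_or_ne y 0 with rfl | hy0
  · simp [appellF2, gauss2F1, mc_zero]
  -- main case
  have hy1 : (1 : F) - y ≠ 0 := sub_ne_zero.mpr (Ne.symm hy)
  have hx' : x / (1 - y) ≠ 0 := div_ne_zero hx hy1
  set q1 : ℂ := (Fintype.card F : ℂ) - 1 with hq1
  set J : ℂ := ∑ w : F, B' w * A⁻¹ (1 - w) with hJ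
  set D : ℂ := A⁻¹ (-y) * (q1 * deltaChar (A * B'⁻¹)) with hD
  set g : F → ℂ := fun u => B u * (B⁻¹ * C) (1 - u) with hg
  set Gsum1 : ℂ := ∑ u : F, B u * (B⁻¹ * C) (1 - u) * A⁻¹ (1 - x / (1 - y) * u) with hGsum1
  set Ksum : ℂ := ∑ u : F, g u * (A⁻¹ (1 - u * x) * B' (1 - u * x)) with hKsum
  -- the sum over v, without the ε factor, for u ≠ x⁻¹
  have hplain : ∀ u : F, u ≠ x⁻¹ →
      (∑ v : F, B' v * A⁻¹ (1 - u * x - v * y)) =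
        B'⁻¹ y * (A⁻¹ (1 - u * x) * B' (1 - u * x) * J) := by
    intro u hu
    have hc : (1 : F) - u * x ≠ 0 := by
      intro h
      rw [sub_eq_zero] at h
      exact hu (eq_inv_of_mul_eq_one_left h.symm)
    set c : F := (1 - u * x) / y with hcdef
    have hcne : c ≠ 0 := div_ne_zero hc hy0
    have hcy : ∀ w : F, 1 - u * x - c * w * y = (1 - u * x) * (1 - w) := by
      intro w
      rw [hcdef]
      field_simp
    calc ∑ v : F, B' v * A⁻¹ (1 - u * x - v * y)
        = ∑ w : F, B' (c * w) * A⁻¹ (1 - u * x - c * w * y) :=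
          (Fintype.sum_bijective _ (mulLeft_bijective₀ c hcne)
            (fun w => B' (c * w) * A⁻¹ (1 - u * x - c * w * y))
            (fun v => B' v * A⁻¹ (1 - u * x - v * y)) (fun w => rfl)).symm
      _ = ∑ w : F, (B' c * A⁻¹ (1 - u * x)) * (B' w * A⁻¹ (1 - w)) := by
          refine Finset.sum_congr rfl fun w _ => ?_
          rw [hcy, map_mul B', map_mul A⁻¹]
          ring
      _ = (B' c * A⁻¹ (1 - u * x)) * J := by rw [← Finset.mul_sum]
      _ = B'⁻¹ y * (A⁻¹ (1 - u * x) * B' (1 - u * x) * J) := by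
          rw [hcdef, div_eq_mul_inv, map_mul B', mc_inv_val, mc_inv_apply, mc_inv_apply B' y]
          ring
  -- the sum over v at u = x⁻¹
  have hplainx : (∑ v : F, B' v * A⁻¹ (1 - x⁻¹ * x - v * y)) = D := by
    have h0 : (1 : F) - x⁻¹ * x = 0 := by rw [inv_mul_cancel₀ hx, sub_self]
    calc ∑ v : F, B' v * A⁻¹ (1 - x⁻¹ * x - v * y)
        = ∑ v : F, A⁻¹ (-y) * ((B' * A⁻¹) v) := by
          refine Finset.sum_congr rfl fun v _ => ?_
          rw [h0, zero_sub, show -(v * y) = (-y) * v by ring, map_mul A⁻¹, mc_mul_apply]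
          ring
      _ = A⁻¹ (-y) * ∑ v : F, (B' * A⁻¹) v := by rw [Finset.mul_sum]
      _ = D := by
          rw [mc_sum, hD]
          have hiff : (B' * A⁻¹ = 1) ↔ (A * B'⁻¹ = 1) := by
            rw [show B' * A⁻¹ = (A * B'⁻¹)⁻¹ by rw [mul_inv, inv_inv, mul_comm]]
            exact inv_eq_one
          unfold deltaChar
          by_cases h : A * B'⁻¹ = 1
          · rw [if_pos (hiff.mpr h), if_pos h]; ring
          · rw [if_neg (fun hh => h (hiff.mp hh)), if_neg h]; ring
  -- per-u identity for the full inner sum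
  have huu : ∀ u : F,
      (∑ v : F, B u * B' v * (B⁻¹ * C) (1 - u) * (B'⁻¹ * B') (1 - v) *
          A⁻¹ (1 - u * x - v * y)) =
        (B'⁻¹ y * J * (g u * (A⁻¹ (1 - u * x) * B' (1 - u * x))) +
          (if u = x⁻¹ then g u * D else 0)) -
          A⁻¹ (1 - y) * (g u * A⁻¹ (1 - x / (1 - y) * u)) := by
    intro u
    have harg : (1 : F) - u * x - y = (1 - y) * (1 - x / (1 - y) * u) := by
      field_simp
      ring
    have step1 : (∑ v : F, B u * B' v * (B⁻¹ * C) (1 - u) * (B'⁻¹ * B') (1 - v) *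
        A⁻¹ (1 - u * x - v * y)) =
        g u * ((∑ v : F, B' v * A⁻¹ (1 - u * x - v * y)) - A⁻¹ (1 - u * x - y)) := by
      have e1 : B'⁻¹ * B' = (1 : MulChar F ℂ) := inv_mul_cancel B'
      calc (∑ v : F, B u * B' v * (B⁻¹ * C) (1 - u) * (B'⁻¹ * B') (1 - v) *
            A⁻¹ (1 - u * x - v * y))
          = ∑ v : F, g u * ((1 : MulChar F ℂ) (1 - v) *
              (B' v * A⁻¹ (1 - u * x - v * y))) := by
            refine Finset.sum_congr rfl fun v _ => ?_
            rw [e1, hg]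
            ring
        _ = g u * ∑ v : F, (1 : MulChar F ℂ) (1 - v) *
              (B' v * A⁻¹ (1 - u * x - v * y)) := by rw [Finset.mul_sum]
        _ = g u * ((∑ v : F, B' v * A⁻¹ (1 - u * x - v * y)) - A⁻¹ (1 - u * x - y)) := by
            rw [eps_sum (fun v => B' v * A⁻¹ (1 - u * x - v * y))]
            simp [map_one B']
    rw [step1, harg, map_mul A⁻¹]
    by_cases hu : u = x⁻¹
    · subst hu
      rw [hplainx, if_pos rfl]
      have h0 : (1 : F) - x⁻¹ * x = 0 := by rw [inv_mul_cancel₀ hx, sub_self]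
      rw [h0, mc_zero A⁻¹]
      ring
    · rw [hplain u hu, if_neg hu]
      ring
  -- prefactor
  have hpre : (B * B' * C * B') (-1) = (B * C) (-1) := by
    simp only [mc_mul_apply]
    linear_combination B (-1) * C (-1) * mc_neg_one_sq B'
  -- the left-hand side
  have hL : appellF2 A B B' C B' x y =
      (B * C) (-1) * (B'⁻¹ y * J * Ksum) + (B * C) (-1) * (g x⁻¹ * D) -
        (B * C) (-1) * (A⁻¹ (1 - y) * Gsum1) := by
    rw [appellF2, mc_one_apply' (mul_ne_zero hx hy0), one_mul, hpre]
    rw [Finset.sum_congr rfl fun u _ => huu u]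
    rw [Finset.sum_sub_distrib, Finset.sum_add_distrib, Finset.sum_ite_eq' univ x⁻¹
      (fun u => g u * D), if_pos (mem_univ _)]
    rw [← Finset.mul_sum, ← Finset.mul_sum, ← hKsum]
    have hgs : (∑ u : F, g u * A⁻¹ (1 - x / (1 - y) * u)) = Gsum1 := by
      rw [hGsum1]
    rw [hgs]
    ring
  -- the Gauss sums on the right-hand side
  have hG1 : gauss2F1 A B C (x / (1 - y)) = (B * C) (-1) * Gsum1 := by
    rw [gauss2F1, mc_one_apply' hx', one_mul, hGsum1]
  have hG2 : gauss2F1 (A * B'⁻¹) B C x = (B * C) (-1) * Ksum := by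
    rw [gauss2F1, mc_one_apply' hx, one_mul, hKsum]
    congr 1
    refine Finset.sum_congr rfl fun u _ => ?_
    simp only [show ((A * B'⁻¹)⁻¹ : MulChar F ℂ) = A⁻¹ * B' from by rw [mul_inv, inv_inv],
      mc_mul_apply, mul_comm x u, hg]
  -- the binomial coefficient equals the Jacobi sum J
  have hBin : binom (A * B'⁻¹) B'⁻¹ = J := by
    rw [binom, hJ, jacobi_flip A B', inv_inv, mc_inv_apply,
      inv_eq_of_mul_eq_one_left (mc_neg_one_sq B')]
  -- the middle terms
  have hT23 : (B * C) (-1) * (g x⁻¹ * D) =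
      A⁻¹ (-y) * C⁻¹ x * (B⁻¹ * C) (1 - x) * (q1 * deltaChar (A * B'⁻¹)) := by
    have e1 : (1 : F) - x⁻¹ = x⁻¹ * ((-1) * (1 - x)) := by
      field_simp
      ring
    simp only [hg, hD]
    rw [e1, map_mul (B⁻¹ * C), map_mul (B⁻¹ * C)]
    simp only [mc_mul_apply, mc_inv_apply, mc_inv_val, inv_inv]
    have hBx := mc_ne_zero B hx
    have hCx := mc_ne_zero C hx
    have hB1 : B (-1) ≠ 0 := mc_ne_zero B (by norm_num)
    have hC1 : C (-1) ≠ 0 := mc_ne_zero C (by norm_num)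
    have hAy : A (-y) ≠ 0 := mc_ne_zero A (neg_ne_zero.mpr hy0)
    have hc2 : C (-1) * C (-1) = 1 := mc_neg_one_sq C
    have hbb : B (-1) * (B (-1))⁻¹ = 1 := mul_inv_cancel₀ hB1
    field_simp
    linear_combination
      ((C (1 - x) * (Fintype.card F : ℂ) - C (1 - x)) * deltaChar (A * B'⁻¹) *
          (B (1 - x))⁻¹) * hc2
  have h1y : (1 : MulChar F ℂ) y = 1 := mc_one_apply' hy0
  rw [hL, hG1, hG2, hBin, h1y, hT23]
  ring
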